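/- Let G be a simple graph and (C, V\C) a non-trivial minimum cut (i.e., |C| ≥ 2 and |V\C| ≥ 2). Let X' ⊆ V with min{|X'∩C|, |X'\C|} ≤ 2, and let X'' = {v ∈ X' : |E(v, X')| > deg(v)/2 + 1}. Then X'' ⊆ C or X'' ⊆ V\C (i.e., min{|X''∩C|, |X''\C|} = 0). -/
import Mathlib


open Finset

variable {V : Type*} [Fintype V] [DecidableEq V]

/-- Number of ordered adjacencies from `A` to `B`; for disjoint `A B` this is `|E(A,B)|`. -/
def eBtw (G : SimpleGraph V) [DecidableRel G.Adj] (A B : Finset V) : ℕ :=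
  ∑ a ∈ A, (B.filter (G.Adj a)).card

/-- `|E(v,S)|`: number of edges from `v` to `S`. -/
def eV (G : SimpleGraph V) [DecidableRel G.Adj] (v : V) (S : Finset V) : ℕ :=
  (S.filter (G.Adj v)).card

/-- Volume `vol_G(S)`. -/
def vol (G : SimpleGraph V) [DecidableRel G.Adj] (S : Finset V) : ℕ :=
  ∑ v ∈ S, G.degree v

/-- Value of the cut `(C, V \ C)`. -/
def cutVal (G : SimpleGraph V) [DecidableRel G.Adj] (C : Finset V) : ℕ :=
  eBtw G C Cᶜ

/-- `(C, V \ C)` is a minimum cut. -/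
def IsMinCut (G : SimpleGraph V) [DecidableRel G.Adj] (C : Finset V) : Prop :=
  C.Nonempty ∧ Cᶜ.Nonempty ∧
    ∀ D : Finset V, D.Nonempty → Dᶜ.Nonempty → cutVal G C ≤ cutVal G D

/-- `|E(A,A)|`: number of edges with both endpoints in `A`. -/
def inEdges (G : SimpleGraph V) [DecidableRel G.Adj] (A : Finset V) : ℕ :=
  (G.edgeFinset.filter (fun e => ∀ v ∈ e, v ∈ A)).card

lemma eBtw_comm (G : SimpleGraph V) [DecidableRel G.Adj] (A B : Finset V) :
    eBtw G A B = eBtw G B A := by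
  unfold eBtw
  simp only [card_filter]
  rw [Finset.sum_comm]
  congr 1; ext b; congr 1; ext a
  simp [G.adj_comm]

lemma cutVal_compl (G : SimpleGraph V) [DecidableRel G.Adj] (C : Finset V) :
    cutVal G Cᶜ = cutVal G C := by
  unfold cutVal
  rw [compl_compl, eBtw_comm]

lemma deg_split (G : SimpleGraph V) [DecidableRel G.Adj] {C : Finset V} {u : V} (hu : u ∈ C) :
    G.degree u = eV G u (C.erase u) + eV G u Cᶜ := by
  rw [← G.card_neighborFinset_eq_degree]
  unfold eV
  rw [← card_union_of_disjoint]
  · congr 1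
    ext x
    simp only [SimpleGraph.mem_neighborFinset, mem_union, mem_filter, mem_erase, mem_compl]
    constructor
    · intro h
      by_cases hx : x ∈ C
      · exact Or.inl ⟨⟨G.ne_of_adj h |>.symm, hx⟩, h⟩
      · exact Or.inr ⟨hx, h⟩
    · rintro (⟨_, h⟩ | ⟨_, h⟩) <;> exact h
  · exact disjoint_filter_filter (disjoint_compl_right.mono_left (erase_subset _ _))

lemma cutVal_erase (G : SimpleGraph V) [DecidableRel G.Adj] {C : Finset V} {u : V} (hu : u ∈ C) :
    cutVal G (C.erase u) + 2 * eV G u Cᶜ = cutVal G C + G.degree u := by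
  have hcompl : (C.erase u)ᶜ = insert u Cᶜ := by
    ext x; simp only [mem_compl, mem_erase, mem_insert]; tauto
  have h1 : cutVal G C = (∑ a ∈ C.erase u, ((Cᶜ).filter (G.Adj a)).card) + eV G u Cᶜ := by
    unfold cutVal eBtw eV
    rw [← Finset.add_sum_erase _ _ hu, add_comm]
  have h2 : cutVal G (C.erase u)
      = (∑ a ∈ C.erase u, ((Cᶜ).filter (G.Adj a)).card) + eV G u (C.erase u) := by
    unfold cutVal eBtw
    rw [hcompl]
    have : ∀ a ∈ C.erase u, ((insert u Cᶜ).filter (G.Adj a)).card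
        = ((Cᶜ).filter (G.Adj a)).card + (if G.Adj a u then 1 else 0) := by
      intro a ha
      rw [filter_insert]
      split
      · rw [card_insert_of_notMem (by simp [hu])]
      · simp
    rw [Finset.sum_congr rfl this, Finset.sum_add_distrib]
    congr 1
    unfold eV
    rw [card_filter]
    congr 1; ext a; congr 1
    simp [G.adj_comm]
  rw [h2, deg_split G hu, h1]
  ring

lemma move_contra (G : SimpleGraph V) [DecidableRel G.Adj] {C : Finset V} {u : V}
    (hmin : IsMinCut G C) (hcard : 2 ≤ C.card) (hu : u ∈ C)
    (hdeg : G.degree u < 2 * eV G u Cᶜ) : False := by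
  have hne : (C.erase u).Nonempty := by
    rw [← card_pos, card_erase_of_mem hu]; omega
  have hne2 : (C.erase u)ᶜ.Nonempty := ⟨u, by simp⟩
  have := hmin.2.2 _ hne hne2
  have := cutVal_erase G hu
  omega

lemma key_ineq (G : SimpleGraph V) [DecidableRel G.Adj] {C X' : Finset V} {v : V}
    (hsm : (X' ∩ C).card ≤ 2) (hv : v ∈ X') (hvC : v ∈ C)
    (hbig : (G.degree v : ℝ) / 2 + 1 < (eV G v X' : ℝ)) :
    G.degree v < 2 * eV G v Cᶜ := by
  have hsplit : eV G v X' ≤ eV G v (X' ∩ C) + eV G v (X' \ C) := by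
    unfold eV
    calc (X'.filter (G.Adj v)).card
        = (((X' ∩ C) ∪ (X' \ C)).filter (G.Adj v)).card := by
          have hpart : X' ∩ C ∪ X' \ C = X' := by
            ext x; simp only [mem_union, mem_inter, mem_sdiff]; tauto
          rw [hpart]
      _ ≤ _ := by rw [filter_union]; exact card_union_le _ _
  have h1 : eV G v (X' ∩ C) ≤ 1 := by
    unfold eV
    have hsub : (X' ∩ C).filter (G.Adj v) ⊆ (X' ∩ C).erase v := by
      intro x hx
      simp only [mem_filter] at hx
      exact mem_erase.2 ⟨(G.ne_of_adj hx.2).symm, hx.1⟩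
    calc ((X' ∩ C).filter (G.Adj v)).card ≤ ((X' ∩ C).erase v).card := card_le_card hsub
      _ ≤ (X' ∩ C).card - 1 := by rw [card_erase_of_mem (mem_inter.2 ⟨hv, hvC⟩)]
      _ ≤ 1 := by omega
  have h2 : eV G v (X' \ C) ≤ eV G v Cᶜ := by
    unfold eV
    exact card_le_card (filter_subset_filter _ (fun x hx => mem_compl.2 (mem_sdiff.1 hx).2))
  have : (G.degree v : ℝ) / 2 < (eV G v Cᶜ : ℝ) := by
    have : (eV G v X' : ℝ) ≤ 1 + (eV G v Cᶜ : ℝ) := by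
      push_cast
      have := hsplit.trans (add_le_add h1 h2)
      exact_mod_cast this
    linarith
  have : (G.degree v : ℝ) < 2 * (eV G v Cᶜ : ℝ) := by linarith
  exact_mod_cast this

theorem stmt2 (G : SimpleGraph V) [DecidableRel G.Adj]
    (C : Finset V) (hC : IsMinCut G C) (hC1 : 2 ≤ C.card) (hC2 : 2 ≤ Cᶜ.card)
    (X' : Finset V)
    (hsmall : min ((X' ∩ C).card) ((X' \ C).card) ≤ 2)
    (X'' : Finset V)
    (hX'' : X'' = X'.filter (fun v => (G.degree v : ℝ) / 2 + 1 < (eV G v X' : ℝ))) :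
    min ((X'' ∩ C).card) ((X'' \ C).card) = 0 := by
  by_contra h
  have h1 : (X'' ∩ C).Nonempty := by
    rw [← card_pos]; omega
  have h2 : (X'' \ C).Nonempty := by
    rw [← card_pos]; omega
  obtain ⟨u, hu⟩ := h1
  obtain ⟨w, hw⟩ := h2
  rw [mem_inter, hX'', mem_filter] at hu
  rw [mem_sdiff, hX'', mem_filter] at hw
  have hCc : IsMinCut G Cᶜ :=
    ⟨hC.2.1, by rw [compl_compl]; exact hC.1,
     fun D hD hDc => by rw [cutVal_compl]; exact hC.2.2 D hD hDc⟩
  rcases min_le_iff.1 hsmall with hsm | hsm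
  · exact move_contra G hC hC1 hu.2 (key_ineq G hsm hu.1.1 hu.2 hu.1.2)
  · have hsm' : (X' ∩ Cᶜ).card ≤ 2 := by
      rwa [← Finset.sdiff_eq_inter_compl] at *
    exact move_contra G hCc hC2 (mem_compl.2 hw.2)
      (key_ineq G hsm' hw.1.1 (mem_compl.2 hw.2) hw.1.2)
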